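/- Let a feedforward network be given as in the context, with input x ∈ ℝ^{n_0}, baseline input x̄ ∈ ℝ^{n_0}, and target unit c. Assume z^(l)_j ≠ z̄^(l)_j for all l = 1,…,L and all j. Define unit-wise multipliers g^(l)_j = (f(z^(l)_j) − f(z̄^(l)_j)) / (z^(l)_j − z̄^(l)_j). Then for every input index i, the DeepLIFT (Rescale) relevance of input feature i equals the feature-wise product of the input difference with the modified partial derivative: r^(0)_i = (x_i − x̄_i) · ∂^g S_c/∂x_i. -/

import Mathlib

/-- Forward pass of a feedforward network: `fwd n W b f x0 l` is the vector of
activations `x^(l)` of layer `l`. -/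
noncomputable def fwd (n : ℕ → ℕ) (W : ∀ l, Fin (n (l + 1)) → Fin (n l) → ℝ)
    (b : ∀ l, Fin (n (l + 1)) → ℝ) (f : ℝ → ℝ) (x0 : Fin (n 0) → ℝ) :
    ∀ l, Fin (n l) → ℝ
  | 0 => x0
  | (l + 1) => fun j => f (∑ i, W l j i * fwd n W b f x0 l i + b l j)

/-- Pre-activations: `preact n W b f x0 l j` is `z^(l+1)_j = ∑_i W^(l+1)_{ji} x^(l)_i + b^(l+1)_j`. -/
noncomputable def preact (n : ℕ → ℕ) (W : ∀ l, Fin (n (l + 1)) → Fin (n l) → ℝ)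
    (b : ∀ l, Fin (n (l + 1)) → ℝ) (f : ℝ → ℝ) (x0 : Fin (n 0) → ℝ)
    (l : ℕ) (j : Fin (n (l + 1))) : ℝ :=
  ∑ i, W l j i * fwd n W b f x0 l i + b l j

/-- **Proposition 2 (DeepLIFT (Rescale) as modified backpropagation).**
For a feedforward network with `L = M + 1 ≥ 1` layers, input `x`, baseline `x̄` and target
unit `c`, assume `z^(l)_j ≠ z̄^(l)_j` for all `l = 1, …, L` and all `j`.  Let the unit-wise
multipliers be `g^(l)_j = (f(z^(l)_j) - f(z̄^(l)_j)) / (z^(l)_j - z̄^(l)_j)`, let `d` be the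
modified backpropagation values computed with these multipliers, and let `r` be the
DeepLIFT (Rescale) relevances.  Then the DeepLIFT relevance of each input feature `i`
equals `(x_i - x̄_i) ⬝ ∂^g S_c/∂x_i = (x_i - x̄_i) ⬝ ∑_j W^(1)_{ji} d^(1)_j`. -/
theorem deeplift_eq_inputdiff_times_modified_gradient
    (M : ℕ) (n : ℕ → ℕ)
    (W : ∀ l, Fin (n (l + 1)) → Fin (n l) → ℝ)
    (b : ∀ l, Fin (n (l + 1)) → ℝ)
    (f : ℝ → ℝ) (x0 xb : Fin (n 0) → ℝ)
    (c : Fin (n (M + 1)))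
    -- `z^(l)_j ≠ z̄^(l)_j` for all `l = 1, …, L` and all `j`
    (hz : ∀ l, l < M + 1 → ∀ j : Fin (n (l + 1)),
      preact n W b f x0 l j ≠ preact n W b f xb l j)
    -- modified backpropagation with multipliers
    -- `g^(l)_j = (f(z^(l)_j) - f(z̄^(l)_j)) / (z^(l)_j - z̄^(l)_j)`
    (d : ∀ l, Fin (n l) → ℝ)
    (hdTop : ∀ j : Fin (n (M + 1)),
      d (M + 1) j = if j = c then
        (f (preact n W b f x0 M c) - f (preact n W b f xb M c)) /
          (preact n W b f x0 M c - preact n W b f xb M c) else 0)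
    (hdRec : ∀ m, m < M → ∀ j : Fin (n (m + 1)),
      d (m + 1) j = ((f (preact n W b f x0 m j) - f (preact n W b f xb m j)) /
          (preact n W b f x0 m j - preact n W b f xb m j)) *
        ∑ k, W (m + 1) k j * d (m + 2) k)
    -- DeepLIFT (Rescale) relevances
    (r : ∀ l, Fin (n l) → ℝ)
    (hrTop : ∀ j : Fin (n (M + 1)),
      r (M + 1) j = if j = c then fwd n W b f x0 (M + 1) j - fwd n W b f xb (M + 1) j else 0)
    (hrRec : ∀ l, l < M + 1 → ∀ j : Fin (n l),
      r l j = ∑ k, (W l k j * (fwd n W b f x0 l j - fwd n W b f xb l j) /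
        (preact n W b f x0 l k - preact n W b f xb l k)) * r (l + 1) k) :
    ∀ i : Fin (n 0), r 0 i = (x0 i - xb i) * ∑ j, W 0 j i * d 1 j := by
  have key : ∀ t l, l + t = M → ∀ j : Fin (n l),
      r l j = (fwd n W b f x0 l j - fwd n W b f xb l j) * ∑ k, W l k j * d (l + 1) k := by
    intro t
    induction t with
    | zero =>
      intro l hl j
      subst hl
      rw [hrRec l (Nat.lt_succ_self l) j, Finset.mul_sum]
      refine Finset.sum_congr rfl fun k _ => ?_
      have hzk := sub_ne_zero_of_ne (hz l (Nat.lt_succ_self l) k)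
      rw [hrTop k, hdTop k]
      by_cases hk : k = c
      · subst hk
        rw [if_pos rfl, if_pos rfl]
        simp only [Nat.add_zero]
        have hf1 : fwd n W b f x0 (l + 1) k = f (preact n W b f x0 l k) := rfl
        have hf2 : fwd n W b f xb (l + 1) k = f (preact n W b f xb l k) := rfl
        rw [hf1, hf2]
        field_simp
      · simp [hk]
    | succ t ih =>
      intro l hl j
      have hlM : l < M := by omega
      rw [hrRec l (by omega) j, Finset.mul_sum]
      refine Finset.sum_congr rfl fun k _ => ?_
      have hzk := sub_ne_zero_of_ne (hz l (by omega) k)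
      rw [ih (l + 1) (by omega) k, hdRec l hlM k]
      have hf1 : fwd n W b f x0 (l + 1) k = f (preact n W b f x0 l k) := rfl
      have hf2 : fwd n W b f xb (l + 1) k = f (preact n W b f xb l k) := rfl
      rw [hf1, hf2]
      field_simp
  intro i
  have h := key M 0 (by omega) i
  simpa [fwd] using h
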